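/- Let n ≥ 4 and k ≥ 2 be integers, fix indices i ≠ j in {1,…,k} and u, v ∈ {1,…,n}, and let z = z_{ij}^{uv} ∈ ℝ^{2k} be the associated constraint direction. Then for every tuple (u_1,…,u_k) ∈ {1,…,2n}^k such that NOT (u_i ≡ u (mod n) and u_j ≡ v (mod n)), one has |⟨l(u_1,…,u_k), z⟩| > μ/√k, where μ = 1/(9n² + 36n⁴ + 2). -/

import Mathlib

open scoped RealInnerProductSpace
open Real

/-- The candidate stabbing direction `l(u_1,…,u_k) ∈ ℝ^{2k}`: its `m`-th planar projection
is `(1/√k)·(cos((2u_m−1)π/(2n)), sin((2u_m−1)π/(2n)))`. -/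
noncomputable def stabDir (k n : ℕ) (U : Fin k → ℕ) : EuclideanSpace ℝ (Fin (2 * k)) :=
  (WithLp.equiv 2 (Fin (2 * k) → ℝ)).symm fun idx =>
    let m : Fin k := ⟨(idx : ℕ) / 2, by have := idx.2; omega⟩
    let θ : ℝ := (2 * (U m : ℝ) - 1) * Real.pi / (2 * n)
    (1 / Real.sqrt k) * (if (idx : ℕ) % 2 = 0 then Real.cos θ else Real.sin θ)

/-- The constraint direction `z_{ij}^{uv} ∈ ℝ^{2k}`, with
`θ_i = (2u−1)π/(2n)`, `θ_j = (2v−1)π/(2n)`, `μ = 1/(9n² + 36n⁴ + 2)`: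
its `i`-th planar projection is `μ·(cos θ_i − 3n sin θ_i, sin θ_i + 3n cos θ_i)`,
its `j`-th planar projection is `μ·(−cos θ_j − 6n² sin θ_j, −sin θ_j + 6n² cos θ_j)`,
and its other coordinates are `0`. -/
noncomputable def constraintDir (k n : ℕ) (i j : Fin k) (u v : ℕ) :
    EuclideanSpace ℝ (Fin (2 * k)) :=
  (WithLp.equiv 2 (Fin (2 * k) → ℝ)).symm fun idx =>
    let μ : ℝ := 1 / (9 * (n : ℝ) ^ 2 + 36 * (n : ℝ) ^ 4 + 2)
    let θi : ℝ := (2 * (u : ℝ) - 1) * Real.pi / (2 * n)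
    let θj : ℝ := (2 * (v : ℝ) - 1) * Real.pi / (2 * n)
    if (idx : ℕ) = 2 * (i : ℕ) then μ * (Real.cos θi - 3 * n * Real.sin θi)
    else if (idx : ℕ) = 2 * (i : ℕ) + 1 then μ * (Real.sin θi + 3 * n * Real.cos θi)
    else if (idx : ℕ) = 2 * (j : ℕ) then μ * (-Real.cos θj - 6 * (n : ℝ) ^ 2 * Real.sin θj)
    else if (idx : ℕ) = 2 * (j : ℕ) + 1 then μ * (-Real.sin θj + 6 * (n : ℝ) ^ 2 * Real.cos θj)
    else 0


private lemma jordAux (n : ℕ) (hn : 1 ≤ n) (r : ℤ) (h1 : 1 ≤ r) (h2 : 2*r ≤ n) :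
    2 / (n:ℝ) ≤ Real.sin (r * π / n) := by
  have hn0 : (0:ℝ) < n := by exact_mod_cast hn
  have hr0 : (0:ℝ) < r := by exact_mod_cast h1
  have hpi : (0:ℝ) < π := Real.pi_pos
  have hx0 : 0 ≤ (r:ℝ) * π / n := by positivity
  have hx2 : (r:ℝ) * π / n ≤ π / 2 := by
    have : (2:ℝ) * r ≤ n := by exact_mod_cast h2
    rw [div_le_div_iff₀ hn0 two_pos]
    nlinarith
  have key := Real.mul_le_sin hx0 hx2
  have heq : 2 / π * ((r:ℝ) * π / n) = 2 * r / n := by field_simp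
  rw [heq] at key
  have h1' : (1:ℝ) ≤ r := by exact_mod_cast h1
  refine le_trans ?_ key
  gcongr
  linarith

private lemma jordAux2 (n : ℕ) (hn : 1 ≤ n) (r : ℤ) (h1 : 1 ≤ r) (h2 : r ≤ (n:ℤ) - 1) :
    2 / (n:ℝ) ≤ Real.sin (r * π / n) := by
  rcases le_or_gt (2*r) (n:ℤ) with h | h
  · exact jordAux n hn r h1 h
  · have hn0 : (n:ℝ) ≠ 0 := by positivity
    have heq : (r:ℝ) * π / n = π - ((((n:ℤ) - r :ℤ)):ℝ) * π / n := by
      push_cast; field_simp; ring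
    rw [heq, Real.sin_pi_sub]
    exact jordAux n hn ((n:ℤ) - r) (by omega) (by omega)

private lemma sin_lb (n : ℕ) (hn : 1 ≤ n) (a : ℤ) (ha : ¬ (n:ℤ) ∣ a) :
    2 / (n:ℝ) ≤ |Real.sin (a * π / n)| := by
  set r : ℤ := a % n with hr
  set q : ℤ := a / n with hq
  have hn0 : (0:ℤ) < n := by exact_mod_cast hn
  have hnR : (n:ℝ) ≠ 0 := by positivity
  have hdecomp : a = n * q + r := by rw [hq, hr]; exact (Int.mul_ediv_add_emod a n).symm
  have hr1 : 1 ≤ r := by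
    have := Int.emod_nonneg a (by omega : (n:ℤ) ≠ 0)
    rcases eq_or_lt_of_le this with h0 | h0
    · exact absurd (Int.dvd_of_emod_eq_zero h0.symm) ha
    · omega
  have hr2 : r ≤ (n:ℤ) - 1 := by
    have := Int.emod_lt_of_pos a hn0
    omega
  have hsplit : (a:ℝ) * π / n = (q:ℝ) * π + (r:ℝ) * π / n := by
    rw [hdecomp]; push_cast; field_simp
  rw [hsplit, Real.sin_add, Real.sin_int_mul_pi, zero_mul, zero_add, abs_mul,
    Real.abs_cos_int_mul_pi, one_mul]
  exact (jordAux2 n hn r hr1 hr2).trans (le_abs_self _)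

private lemma sin_eq_zero_of_dvd (n : ℕ) (hn : 1 ≤ n) (a : ℤ) (ha : (n:ℤ) ∣ a) :
    Real.sin (a * π / n) = 0 := by
  obtain ⟨c, rfl⟩ := ha
  have hnR : (n:ℝ) ≠ 0 := by positivity
  have : ((((n:ℤ)*c : ℤ)):ℝ) * π / n = (c:ℝ) * π := by push_cast; field_simp
  rw [this, Real.sin_int_mul_pi]

set_option maxHeartbeats 1000000 in
private lemma inner_formula (k n : ℕ) (hn : 4 ≤ n) (hk : 2 ≤ k)
    (i j : Fin k) (hij : i ≠ j) (u v : ℕ) (U : Fin k → ℕ) :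
    ⟪stabDir k n U, constraintDir k n i j u v⟫ =
      (1 / Real.sqrt k) * ((1 / (9 * (n : ℝ) ^ 2 + 36 * (n : ℝ) ^ 4 + 2)) *
      (Real.cos ((2 * (U i : ℝ) - 1) * π / (2 * n)) * (Real.cos ((2 * (u : ℝ) - 1) * π / (2 * n)) - 3 * n * Real.sin ((2 * (u : ℝ) - 1) * π / (2 * n)))
       + Real.sin ((2 * (U i : ℝ) - 1) * π / (2 * n)) * (Real.sin ((2 * (u : ℝ) - 1) * π / (2 * n)) + 3 * n * Real.cos ((2 * (u : ℝ) - 1) * π / (2 * n)))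
       + Real.cos ((2 * (U j : ℝ) - 1) * π / (2 * n)) * (-Real.cos ((2 * (v : ℝ) - 1) * π / (2 * n)) - 6 * (n:ℝ)^2 * Real.sin ((2 * (v : ℝ) - 1) * π / (2 * n)))
       + Real.sin ((2 * (U j : ℝ) - 1) * π / (2 * n)) * (-Real.sin ((2 * (v : ℝ) - 1) * π / (2 * n)) + 6 * (n:ℝ)^2 * Real.cos ((2 * (v : ℝ) - 1) * π / (2 * n))))) := by
  classical
  have hij' : (i:ℕ) ≠ (j:ℕ) := fun h => hij (Fin.ext h)
  have hki : 2 * (i:ℕ) + 1 < 2 * k := by have := i.2; omega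
  have hkj : 2 * (j:ℕ) + 1 < 2 * k := by have := j.2; omega
  set a1 : Fin (2*k) := ⟨2*(i:ℕ), by omega⟩ with ha1
  set a2 : Fin (2*k) := ⟨2*(i:ℕ)+1, by omega⟩ with ha2
  set b1 : Fin (2*k) := ⟨2*(j:ℕ), by omega⟩ with hb1
  set b2 : Fin (2*k) := ⟨2*(j:ℕ)+1, by omega⟩ with hb2
  have hinner : ⟪stabDir k n U, constraintDir k n i j u v⟫ =
      ∑ idx : Fin (2*k), stabDir k n U idx * constraintDir k n i j u v idx := by
    simp [PiLp.inner_apply, RCLike.inner_apply, starRingEnd_apply, star_trivial]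
    exact Finset.sum_congr rfl fun _ _ => mul_comm _ _
  rw [hinner]
  have hzero : ∀ x ∈ (Finset.univ : Finset (Fin (2*k))),
      x ∉ ({a1, a2, b1, b2} : Finset (Fin (2*k))) →
      stabDir k n U x * constraintDir k n i j u v x = 0 := by
    intro x _ hx
    simp only [Finset.mem_insert, Finset.mem_singleton, ha1, ha2, hb1, hb2, Fin.ext_iff] at hx
    push_neg at hx
    have : constraintDir k n i j u v x = 0 := by
      simp only [constraintDir, WithLp.equiv_symm_apply, WithLp.ofLp_toLp]
      rw [if_neg hx.1, if_neg hx.2.1, if_neg hx.2.2.1, if_neg hx.2.2.2]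
    rw [this, mul_zero]
  rw [← Finset.sum_subset (Finset.subset_univ ({a1,a2,b1,b2} : Finset (Fin (2*k)))) hzero]
  have hmem : a1 ∉ ({a2, b1, b2} : Finset (Fin (2*k))) := by
    simp [ha1, ha2, hb1, hb2, Fin.ext_iff]; omega
  have hmem2 : a2 ∉ ({b1, b2} : Finset (Fin (2*k))) := by
    simp [ha2, hb1, hb2, Fin.ext_iff]; omega
  have hmem3 : b1 ∉ ({b2} : Finset (Fin (2*k))) := by
    simp [hb1, hb2, Fin.ext_iff]
  rw [Finset.sum_insert hmem, Finset.sum_insert hmem2, Finset.sum_insert hmem3,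
    Finset.sum_singleton]
  have e1 : stabDir k n U a1 = (1/Real.sqrt k) * Real.cos ((2 * (U i : ℝ) - 1) * π / (2 * n)) := by
    simp only [stabDir, WithLp.equiv_symm_apply, WithLp.ofLp_toLp, ha1]
    norm_num [Nat.mul_div_cancel_left]
  have e2 : stabDir k n U a2 = (1/Real.sqrt k) * Real.sin ((2 * (U i : ℝ) - 1) * π / (2 * n)) := by
    simp only [stabDir, WithLp.equiv_symm_apply, WithLp.ofLp_toLp, ha2]
    norm_num [Nat.mul_add_div]
  have e3 : stabDir k n U b1 = (1/Real.sqrt k) * Real.cos ((2 * (U j : ℝ) - 1) * π / (2 * n)) := by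
    simp only [stabDir, WithLp.equiv_symm_apply, WithLp.ofLp_toLp, hb1]
    norm_num [Nat.mul_div_cancel_left]
  have e4 : stabDir k n U b2 = (1/Real.sqrt k) * Real.sin ((2 * (U j : ℝ) - 1) * π / (2 * n)) := by
    simp only [stabDir, WithLp.equiv_symm_apply, WithLp.ofLp_toLp, hb2]
    norm_num [Nat.mul_add_div]
  have f1 : constraintDir k n i j u v a1 = (1 / (9 * (n : ℝ) ^ 2 + 36 * (n : ℝ) ^ 4 + 2)) *
      (Real.cos ((2 * (u : ℝ) - 1) * π / (2 * n)) - 3 * n * Real.sin ((2 * (u : ℝ) - 1) * π / (2 * n))) := by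
    simp only [constraintDir, WithLp.equiv_symm_apply, WithLp.ofLp_toLp, ha1]
    norm_num
  have f2 : constraintDir k n i j u v a2 = (1 / (9 * (n : ℝ) ^ 2 + 36 * (n : ℝ) ^ 4 + 2)) *
      (Real.sin ((2 * (u : ℝ) - 1) * π / (2 * n)) + 3 * n * Real.cos ((2 * (u : ℝ) - 1) * π / (2 * n))) := by
    simp only [constraintDir, WithLp.equiv_symm_apply, WithLp.ofLp_toLp, ha2]
    norm_num
  have f3 : constraintDir k n i j u v b1 = (1 / (9 * (n : ℝ) ^ 2 + 36 * (n : ℝ) ^ 4 + 2)) *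
      (-Real.cos ((2 * (v : ℝ) - 1) * π / (2 * n)) - 6 * (n:ℝ)^2 * Real.sin ((2 * (v : ℝ) - 1) * π / (2 * n))) := by
    simp only [constraintDir, WithLp.equiv_symm_apply, WithLp.ofLp_toLp, hb1]
    rw [if_neg (by omega), if_neg (by omega)]; simp
  have f4 : constraintDir k n i j u v b2 = (1 / (9 * (n : ℝ) ^ 2 + 36 * (n : ℝ) ^ 4 + 2)) *
      (-Real.sin ((2 * (v : ℝ) - 1) * π / (2 * n)) + 6 * (n:ℝ)^2 * Real.cos ((2 * (v : ℝ) - 1) * π / (2 * n))) := by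
    simp only [constraintDir, WithLp.equiv_symm_apply, WithLp.ofLp_toLp, hb2]
    rw [if_neg (by omega), if_neg (by omega), if_neg (by omega)]; simp
  rw [e1, e2, e3, e4, f1, f2, f3, f4]
  ring


set_option maxHeartbeats 1000000 in
/-- For every direction `l(u_1,…,u_k)` such that it is not the case that both
`u_i ≡ u (mod n)` and `u_j ≡ v (mod n)`, the inner product with the constraint direction
`z_{ij}^{uv}` is larger than `μ/√k` in absolute value, where `μ = 1/(9n² + 36n⁴ + 2)`. -/
theorem constraintDir_inner_lower_bound (k n : ℕ) (hn : 4 ≤ n) (hk : 2 ≤ k)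
    (i j : Fin k) (hij : i ≠ j) (u v : ℕ)
    (hu : u ∈ Finset.Icc 1 n) (hv : v ∈ Finset.Icc 1 n)
    (U : Fin k → ℕ) (hU : ∀ m, U m ∈ Finset.Icc 1 (2 * n))
    (hmod : ¬(U i ≡ u [MOD n] ∧ U j ≡ v [MOD n])) :
    |⟪stabDir k n U, constraintDir k n i j u v⟫| >
      (1 / (9 * (n : ℝ) ^ 2 + 36 * (n : ℝ) ^ 4 + 2)) / Real.sqrt k := by
  classical
  have hn1 : 1 ≤ n := by omega
  have hnR : (n:ℝ) ≠ 0 := by positivity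
  have hn4 : (4:ℝ) ≤ n := by exact_mod_cast hn
  have hij' : (i:ℕ) ≠ (j:ℕ) := fun h => hij (Fin.ext h)
  set α : ℝ := (2 * (U i : ℝ) - 1) * π / (2 * n) with hα
  set β : ℝ := (2 * (U j : ℝ) - 1) * π / (2 * n) with hβ
  set θu : ℝ := (2 * (u : ℝ) - 1) * π / (2 * n) with hθu
  set θv : ℝ := (2 * (v : ℝ) - 1) * π / (2 * n) with hθv
  set μ : ℝ := 1 / (9 * (n : ℝ) ^ 2 + 36 * (n : ℝ) ^ 4 + 2) with hμ
  have key := inner_formula k n hn hk i j hij u v U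
  rw [← hα, ← hβ, ← hθu, ← hθv, ← hμ] at key
  -- Step 2: trig simplification
  set a : ℤ := (U i : ℤ) - u with haint
  set b : ℤ := (U j : ℤ) - v with hbint
  have hA : α - θu = (a:ℝ) * π / n := by
    rw [hα, hθu, haint]; push_cast; field_simp; ring
  have hB : β - θv = (b:ℝ) * π / n := by
    rw [hβ, hθv, hbint]; push_cast; field_simp; ring
  set cA : ℝ := Real.cos ((a:ℝ) * π / n) with hcA
  set sA : ℝ := Real.sin ((a:ℝ) * π / n) with hsA
  set cB : ℝ := Real.cos ((b:ℝ) * π / n) with hcB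
  set sB : ℝ := Real.sin ((b:ℝ) * π / n) with hsB
  have htrig : Real.cos α * (Real.cos θu - 3 * n * Real.sin θu)
       + Real.sin α * (Real.sin θu + 3 * n * Real.cos θu)
       + Real.cos β * (-Real.cos θv - 6 * (n:ℝ)^2 * Real.sin θv)
       + Real.sin β * (-Real.sin θv + 6 * (n:ℝ)^2 * Real.cos θv)
      = cA + 3 * n * sA - cB + 6 * (n:ℝ)^2 * sB := by
    rw [hcA, hsA, hcB, hsB, ← hA, ← hB, Real.cos_sub, Real.sin_sub, Real.cos_sub, Real.sin_sub]
    ring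
  rw [key, htrig]
  set E : ℝ := cA + 3 * n * sA - cB + 6 * (n:ℝ)^2 * sB with hE
  -- Step 3: |E| > 1
  have hdvdA : (n:ℤ) ∣ a ↔ U i ≡ u [MOD n] := by
    rw [Nat.modEq_iff_dvd, haint, dvd_sub_comm]
  have hdvdB : (n:ℤ) ∣ b ↔ U j ≡ v [MOD n] := by
    rw [Nat.modEq_iff_dvd, hbint, dvd_sub_comm]
  have hcA1 : |cA| ≤ 1 := Real.abs_cos_le_one _
  have hcB1 : |cB| ≤ 1 := Real.abs_cos_le_one _
  have hsA1 : |sA| ≤ 1 := Real.abs_sin_le_one _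
  have hEgt : 1 < |E| := by
    by_cases hb : (n:ℤ) ∣ b
    · -- then ¬ n ∣ a
      have ha : ¬ (n:ℤ) ∣ a := by
        intro ha
        exact hmod ⟨hdvdA.mp ha, hdvdB.mp hb⟩
      have hsB0 : sB = 0 := sin_eq_zero_of_dvd n hn1 b hb
      have hsAlb : 2 / (n:ℝ) ≤ |sA| := sin_lb n hn1 a ha
      have h2 : 2 ≤ (n:ℝ) * |sA| := by
        rw [div_le_iff₀ (by positivity : (0:ℝ) < n)] at hsAlb
        linarith [hsAlb]
      have hsplit : |3 * (n:ℝ) * sA| - |cA - cB| ≤ |E| := by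
        have h := abs_sub_abs_le_abs_sub (3 * (n:ℝ) * sA) (-(cA - cB))
        rw [abs_neg, sub_neg_eq_add] at h
        refine h.trans_eq ?_
        congr 1
        rw [hE, hsB0]; ring
      have habs : |3 * (n:ℝ) * sA| = 3 * n * |sA| := by
        rw [abs_mul, abs_of_nonneg (by positivity : (0:ℝ) ≤ 3 * (n:ℝ))]
      have hcc : |cA - cB| ≤ 2 := by
        calc |cA - cB| ≤ |cA| + |cB| := abs_sub _ _
          _ ≤ 2 := by linarith
      nlinarith [hsplit, habs, hcc, h2, hn4, abs_nonneg sA]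
    · have hsBlb : 2 / (n:ℝ) ≤ |sB| := sin_lb n hn1 b hb
      have h2 : 2 ≤ (n:ℝ) * |sB| := by
        rw [div_le_iff₀ (by positivity : (0:ℝ) < n)] at hsBlb
        linarith [hsBlb]
      have hsplit : |6 * (n:ℝ)^2 * sB| - |cA + 3 * n * sA - cB| ≤ |E| := by
        have h := abs_sub_abs_le_abs_sub (6 * (n:ℝ)^2 * sB) (-(cA + 3 * n * sA - cB))
        rw [abs_neg, sub_neg_eq_add] at h
        refine h.trans_eq ?_
        congr 1
        rw [hE]; ring
      have habs : |6 * (n:ℝ)^2 * sB| = 6 * (n:ℝ)^2 * |sB| := by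
        rw [abs_mul, abs_of_nonneg (by positivity : (0:ℝ) ≤ 6 * (n:ℝ)^2)]
      have hcc : |cA + 3 * n * sA - cB| ≤ 3 * n + 2 := by
        calc |cA + 3 * n * sA - cB| ≤ |cA + 3 * n * sA| + |cB| := abs_sub _ _
          _ ≤ |cA| + |3 * n * sA| + |cB| := by
              have := abs_add_le cA (3 * (n:ℝ) * sA); linarith
          _ ≤ 3 * n + 2 := by
              have : |3 * (n:ℝ) * sA| = 3 * n * |sA| := by
                rw [abs_mul, abs_of_nonneg (by positivity : (0:ℝ) ≤ 3 * (n:ℝ))]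
              nlinarith
      have h12 : 12 * (n:ℝ) ≤ 6 * (n:ℝ)^2 * |sB| := by nlinarith
      nlinarith [hsplit, habs, hcc, h12, hn4]
  -- Step 4: conclude
  have hkpos : (0:ℝ) < Real.sqrt k := Real.sqrt_pos.mpr (by exact_mod_cast Nat.lt_of_lt_of_le two_pos hk)
  have hμpos : (0:ℝ) < μ := by rw [hμ]; positivity
  have habs : |1 / Real.sqrt k * (μ * E)| = 1 / Real.sqrt k * μ * |E| := by
    rw [abs_mul, abs_mul, abs_of_nonneg (by positivity : (0:ℝ) ≤ 1 / Real.sqrt k),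
      abs_of_nonneg hμpos.le]
    ring
  rw [habs]
  have hrhs : μ / Real.sqrt k = 1 / Real.sqrt k * μ * 1 := by ring
  rw [gt_iff_lt, show (1 / (9 * (n : ℝ) ^ 2 + 36 * (n : ℝ) ^ 4 + 2)) / Real.sqrt k
      = 1 / Real.sqrt k * μ * 1 by rw [hμ]; ring]
  have hcpos : (0:ℝ) < 1 / Real.sqrt k * μ := by positivity
  exact mul_lt_mul_of_pos_left hEgt hcpos
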